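/- In the monoid S presented by ⟨a, b | aab = bba⟩, the elements aba and aab are ∼p-related, the elements bba and bab are ∼p-related, but aba and bab are not ∼p-related; since aab = bba in S, the relation ∼p is not transitive on S. -/

import Mathlib

/-- The defining relation `aab = bba` on the free monoid on two generators. -/
def aabRel : FreeMonoid (Fin 2) → FreeMonoid (Fin 2) → Prop := fun x y =>
  x = FreeMonoid.of 0 * FreeMonoid.of 0 * FreeMonoid.of 1 ∧
  y = FreeMonoid.of 1 * FreeMonoid.of 1 * FreeMonoid.of 0

/-- The monoid `⟨a, b | aab = bba⟩`. -/
abbrev AabMonoid := (conGen aabRel).Quotient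

/-- The images of the generators `a` and `b`. -/
def genA : AabMonoid := (conGen aabRel).mk' (FreeMonoid.of 0)
def genB : AabMonoid := (conGen aabRel).mk' (FreeMonoid.of 1)

/-- `x ∼p y` iff `x = uv` and `y = vu` for some `u, v`. -/
def pRel {S : Type*} [Mul S] (x y : S) : Prop := ∃ u v : S, x = u * v ∧ y = v * u

instance : DecidableEq (Function.End (Fin 3)) :=
  inferInstanceAs (DecidableEq (Fin 3 → Fin 3))

/-- A finite model: two maps on `Fin 3` satisfying `fA ∘ fA ∘ fB = fB ∘ fB ∘ fA`. -/
def fA : Function.End (Fin 3) := ![0, 0, 1]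
def fB : Function.End (Fin 3) := ![0, 2, 0]

def ψ : FreeMonoid (Fin 2) →* Function.End (Fin 3) := FreeMonoid.lift ![fA, fB]

lemma hker : conGen aabRel ≤ Con.ker ψ := by
  apply Con.conGen_le.2
  rintro x y ⟨rfl, rfl⟩
  rw [Con.ker_rel]
  simp only [map_mul, ψ, FreeMonoid.lift_eval_of]
  decide

def φ : AabMonoid →* Function.End (Fin 3) := Con.lift _ ψ hker

lemma φ_mk' (w : FreeMonoid (Fin 2)) : φ ((conGen aabRel).mk' w) = ψ w := rfl

/-- The six elements of the submonoid of `Function.End (Fin 3)` generated by `fA, fB`. -/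
def P (f : Function.End (Fin 3)) : Prop :=
  f = 1 ∨ f = fA ∨ f = fB ∨ f = ![0,0,0] ∨ f = ![0,0,2] ∨ f = ![0,1,0]

instance : DecidablePred P := fun f => by
  unfold P
  exact instDecidableOr (dp := decEq _ _) (dq := instDecidableOr (dp := decEq _ _)
    (dq := instDecidableOr (dp := decEq _ _) (dq := instDecidableOr (dp := decEq _ _)
    (dq := instDecidableOr (dp := decEq _ _) (dq := decEq _ _)))))

lemma memP (w : FreeMonoid (Fin 2)) : P (ψ w) := by
  induction w using FreeMonoid.recOn with
  | one => left; exact map_one ψ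
  | of_mul x xs h =>
    rw [map_mul]
    have : ψ (FreeMonoid.of x) = ![fA, fB] x := FreeMonoid.lift_eval_of _ _
    rw [this]
    fin_cases x <;>
      rcases h with h|h|h|h|h|h <;> rw [h] <;> decide

/-- In the monoid `⟨a, b | aab = bba⟩`: `aba ∼p aab`, `bba ∼p bab`, but `aba ≁p bab`;
since `aab = bba`, the relation `∼p` is not transitive. -/
theorem stmt_7 :
    pRel (genA * genB * genA) (genA * genA * genB) ∧
    pRel (genB * genB * genA) (genB * genA * genB) ∧
    ¬ pRel (genA * genB * genA) (genB * genA * genB) ∧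
    genA * genA * genB = genB * genB * genA ∧
    ¬ Transitive (pRel (S := AabMonoid)) := by
  have heq : genA * genA * genB = genB * genB * genA := by
    simp only [genA, genB, ← map_mul]
    exact (Con.eq _).2 (ConGen.Rel.of _ _ ⟨rfl, rfl⟩)
  have h1 : pRel (genA * genB * genA) (genA * genA * genB) :=
    ⟨genA * genB, genA, by group, by group⟩
  have h2 : pRel (genB * genB * genA) (genB * genA * genB) :=
    ⟨genB, genB * genA, by group, by group⟩
  have h3 : ¬ pRel (genA * genB * genA) (genB * genA * genB) := by
    rintro ⟨u, v, hu, hv⟩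
    obtain ⟨wu, rfl⟩ := Con.mk'_surjective u
    obtain ⟨wv, rfl⟩ := Con.mk'_surjective v
    have e1 := congrArg φ hu
    have e2 := congrArg φ hv
    simp only [map_mul] at e1 e2
    rw [φ_mk', φ_mk'] at e1 e2
    have hA : φ genA = fA := by rw [genA, φ_mk']; exact FreeMonoid.lift_eval_of _ _
    have hB : φ genB = fB := by rw [genB, φ_mk']; exact FreeMonoid.lift_eval_of _ _
    rw [hA, hB] at e1 e2
    have p1 := memP wu
    have p2 := memP wv
    rcases p1 with h|h|h|h|h|h <;> rcases p2 with h'|h'|h'|h'|h'|h' <;>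
      rw [h, h'] at e1 e2 <;> revert e1 e2 <;> decide
  refine ⟨h1, h2, h3, heq, fun htr => h3 (htr h1 ?_)⟩
  rw [heq]; exact h2
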